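/- arXiv:1703.02155 — 2 statements merged into one kernel-verified Lean document; each statement's English description precedes it below -/
import Mathlib

section
/- Let 𝒳 and Φ be measurable spaces, H₀ a probability measure on Φ, p : Φ × 𝒳 → ℝ≥0 jointly measurable, U > 0, and α, β > 0. Let Z_1, …, Z_N be finite subsets (Finsets) of 𝒳, and define the Poisson point process likelihood f(Z | ξ, φ) = ξ^{|Z|} · e^{-ξ} · U^{|Z|} · ∏_{z ∈ Z} p(φ, z) for ξ > 0. Let G₀ = Gamma(α, β) ⊗ H₀ be the prior on (0,∞) × Φ, where Gamma(α, β) is the Gamma distribution with density (β^α/Γ(α)) ξ^{α-1} e^{-βξ}. Assume c := ∫_Φ ∏_{j=1}^N ∏_{z ∈ Z_j} p(φ, z) dH₀(φ) satisfies 0 < c < ∞. Then the posterior — the normalization to a probability measure of the measure with density (ξ, φ) ↦ ∏_{j=1}^N f(Z_j | ξ, φ) with respect to G₀ — equals Gamma(α_𝒵, β_𝒵) ⊗ H_𝒵, where α_𝒵 = α + Σ_{j=1}^N |Z_j|, β_𝒵 = β + N, and H_𝒵 is the probability measure on Φ with density φ ↦ c^{-1} ∏_{j=1}^N ∏_{z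 ∈ Z_j} p(φ, z) with respect to H₀. (Proposition 3, conjugacy part: the Gamma–times–conjugate-prior family G₀ is conjugate with respect to the Poisson point process likelihood.) -/
open MeasureTheory
open scoped ENNReal NNReal

lemma aux_smul_prod_smul {α β : Type*} [MeasurableSpace α] [MeasurableSpace β]
    (a b : ℝ≥0∞) (ha : a ≠ ∞) (hb : b ≠ ∞) (μ : Measure α) (ν : Measure β)
    [IsFiniteMeasure μ] [IsFiniteMeasure ν] :
    (a • μ).prod (b • ν) = (a * b) • μ.prod ν := by
  haveI : IsFiniteMeasure (a • μ) :=
    ⟨by rw [Measure.smul_apply, smul_eq_mul]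
        exact ENNReal.mul_lt_top ha.lt_top (measure_lt_top μ _)⟩
  haveI : IsFiniteMeasure (b • ν) :=
    ⟨by rw [Measure.smul_apply, smul_eq_mul]
        exact ENNReal.mul_lt_top hb.lt_top (measure_lt_top ν _)⟩
  refine Measure.prod_eq fun s t hs ht => ?_
  simp only [Measure.smul_apply, smul_eq_mul, Measure.prod_prod]
  ring

lemma aux_prod_withDensity {α β : Type*} [MeasurableSpace α] [MeasurableSpace β]
    (μ : Measure α) (ν : Measure β) [SFinite μ] [SFinite ν] {g₁ : α → ℝ≥0∞} {g₂ : β → ℝ≥0∞}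
    (h₁ : Measurable g₁) (h₂ : Measurable g₂)
    [SigmaFinite (μ.withDensity g₁)] [SigmaFinite (ν.withDensity g₂)] :
    (μ.prod ν).withDensity (fun x => g₁ x.1 * g₂ x.2)
      = (μ.withDensity g₁).prod (ν.withDensity g₂) := by
  refine (Measure.prod_eq fun s t hs ht => ?_).symm
  rw [withDensity_apply _ (hs.prod ht), ← Measure.prod_restrict,
    lintegral_prod_mul h₁.aemeasurable h₂.aemeasurable,
    withDensity_apply _ hs, withDensity_apply _ ht]

/-- **Proposition 3, conjugacy part.** The prior `G₀ = Gamma(α, β) ⊗ H₀` is conjugate with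
respect to the Poisson point process likelihood
`f(Z | ξ, φ) = ξ^{|Z|} e^{-ξ} U^{|Z|} ∏_{z ∈ Z} p(φ, z)`: the posterior given observations
`Z_1, …, Z_N` is `Gamma(α_𝒵, β_𝒵) ⊗ H_𝒵` with `α_𝒵 = α + Σ_j |Z_j|`, `β_𝒵 = β + N`, and
`H_𝒵` the probability measure with density `φ ↦ c⁻¹ ∏_j ∏_{z ∈ Z_j} p(φ, z)` w.r.t. `H₀`. -/
theorem poisson_point_process_conjugacy
    {𝒳 Φ : Type*} [MeasurableSpace 𝒳] [MeasurableSpace Φ]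
    (H₀ : Measure Φ) [IsProbabilityMeasure H₀]
    (p : Φ × 𝒳 → ℝ≥0) (hp : Measurable p)
    (U : ℝ) (hU : 0 < U) (α β : ℝ) (hα : 0 < α) (hβ : 0 < β)
    (N : ℕ) (Z : Fin N → Finset 𝒳)
    (f : Finset 𝒳 → ℝ × Φ → ℝ≥0∞)
    (hf : ∀ (S : Finset 𝒳) (ξφ : ℝ × Φ), f S ξφ =
      ENNReal.ofReal (ξφ.1 ^ S.card * Real.exp (-ξφ.1) * U ^ S.card) *
        ∏ z ∈ S, (p (ξφ.2, z) : ℝ≥0∞))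
    (G₀ : Measure (ℝ × Φ)) (hG₀ : G₀ = (ProbabilityTheory.gammaMeasure α β).prod H₀)
    (c : ℝ≥0∞)
    (hc : c = ∫⁻ φ, ∏ j : Fin N, ∏ z ∈ Z j, (p (φ, z) : ℝ≥0∞) ∂H₀)
    (hc_pos : 0 < c) (hc_fin : c < ∞)
    (HZ : Measure Φ)
    (hHZ : HZ = H₀.withDensity fun φ => c⁻¹ * ∏ j : Fin N, ∏ z ∈ Z j, (p (φ, z) : ℝ≥0∞))
    (M : Measure (ℝ × Φ))
    (hM : M = G₀.withDensity fun ξφ => ∏ j : Fin N, f (Z j) ξφ) :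
    (M Set.univ)⁻¹ • M =
      (ProbabilityTheory.gammaMeasure (α + ∑ j : Fin N, ((Z j).card : ℝ)) (β + N)).prod HZ := by
  classical
  open ProbabilityTheory in
  -- notation: opaque abbreviations with defining equations
  obtain ⟨K, hK⟩ : ∃ k : ℕ, k = ∑ j : Fin N, (Z j).card := ⟨_, rfl⟩
  obtain ⟨A, hAdef⟩ : ∃ a : ℝ, a = α + (K : ℝ) := ⟨_, rfl⟩
  obtain ⟨R, hRdef⟩ : ∃ r : ℝ, r = β + (N : ℝ) := ⟨_, rfl⟩
  obtain ⟨g₁, hg₁def⟩ : ∃ g : ℝ → ℝ≥0∞,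
      g = fun ξ => ENNReal.ofReal (ξ ^ K * Real.exp (-((N : ℝ) * ξ)) * U ^ K) := ⟨_, rfl⟩
  obtain ⟨g₂, hg₂def⟩ : ∃ g : Φ → ℝ≥0∞,
      g = fun φ => ∏ j : Fin N, ∏ z ∈ Z j, (p (φ, z) : ℝ≥0∞) := ⟨_, rfl⟩
  have hAeq : α + ∑ j : Fin N, ((Z j).card : ℝ) = A := by
    rw [hAdef, hK]; push_cast; ring
  rw [hAeq, show (β + (N : ℝ)) = R from hRdef.symm]
  have hA : 0 < A := by rw [hAdef]; exact add_pos_of_pos_of_nonneg hα (Nat.cast_nonneg K)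
  have hR : 0 < R := by rw [hRdef]; exact add_pos_of_pos_of_nonneg hβ (Nat.cast_nonneg N)
  have hg₁ : Measurable g₁ := by
    rw [hg₁def]
    exact Measurable.ennreal_ofReal
      (((measurable_id.pow_const K).mul
        (Real.measurable_exp.comp (measurable_const.mul measurable_id).neg)).mul
        measurable_const)
  have hg₂ : Measurable g₂ := by
    rw [hg₂def]
    apply Finset.measurable_prod
    intro j _
    apply Finset.measurable_prod
    intro z _
    exact (measurable_coe_nnreal_ennreal.comp (hp.comp (measurable_id.prodMk measurable_const)))
  -- probability measures
  haveI hPαβ : IsProbabilityMeasure (gammaMeasure α β) := isProbabilityMeasure_gammaMeasure hα hβ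
  haveI hPAR : IsProbabilityMeasure (gammaMeasure A R) := isProbabilityMeasure_gammaMeasure hA hR
  have hHZ' : HZ = H₀.withDensity fun φ => c⁻¹ * g₂ φ := by rw [hHZ, hg₂def]
  have hc' : c = ∫⁻ φ, g₂ φ ∂H₀ := by rw [hc, hg₂def]
  have hHZuniv : HZ Set.univ = 1 := by
    rw [hHZ', withDensity_apply _ MeasurableSet.univ, Measure.restrict_univ,
      lintegral_const_mul _ hg₂, ← hc', ENNReal.inv_mul_cancel hc_pos.ne' hc_fin.ne]
  haveI hPHZ : IsProbabilityMeasure HZ := ⟨hHZuniv⟩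
  -- the Φ-component
  have hH2 : H₀.withDensity g₂ = c • HZ := by
    have h : (fun φ => c⁻¹ * g₂ φ) = c⁻¹ • g₂ := rfl
    rw [hHZ', h, withDensity_smul' _ _ (by simp [hc_pos.ne']), smul_smul,
      ENNReal.mul_inv_cancel hc_pos.ne' hc_fin.ne, one_smul]
  -- the ℝ-component
  have hΓα : 0 < Real.Gamma α := Real.Gamma_pos_of_pos hα
  have hΓA : 0 < Real.Gamma A := Real.Gamma_pos_of_pos hA
  have hRA : 0 < R ^ A := Real.rpow_pos_of_pos hR A
  obtain ⟨C₁r, hC₁rdef⟩ : ∃ x : ℝ,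
      x = β ^ α / Real.Gamma α * (Real.Gamma A / R ^ A) * U ^ K := ⟨_, rfl⟩
  have hC₁r : 0 < C₁r := by
    rw [hC₁rdef]
    exact mul_pos (mul_pos (div_pos (Real.rpow_pos_of_pos hβ α) hΓα) (div_pos hΓA hRA))
      (pow_pos hU K)
  obtain ⟨C₁, hC₁def⟩ : ∃ x : ℝ≥0∞, x = ENNReal.ofReal C₁r := ⟨_, rfl⟩
  have hC₁pos : 0 < C₁ := hC₁def ▸ ENNReal.ofReal_pos.mpr hC₁r
  have hC₁fin : C₁ ≠ ∞ := hC₁def ▸ ENNReal.ofReal_ne_top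
  have key : (fun x => gammaPDF α β x * g₁ x) =ᵐ[volume] fun x => C₁ * gammaPDF A R x := by
    have h0 : ∀ᵐ (x : ℝ) ∂volume, x ≠ 0 := by
      rw [ae_iff]
      have h : {x : ℝ | ¬ x ≠ 0} = {0} := by ext x; simp
      rw [h]; exact measure_singleton 0
    filter_upwards [h0] with x hx0
    rcases lt_or_gt_of_ne hx0 with hneg | hpos
    · rw [gammaPDF_of_neg hneg, gammaPDF_of_neg hneg, zero_mul, mul_zero]
    · rw [gammaPDF_of_nonneg hpos.le, gammaPDF_of_nonneg hpos.le, hg₁def, hC₁def]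
      rw [← ENNReal.ofReal_mul
          (mul_nonneg (mul_nonneg (div_nonneg (Real.rpow_nonneg hβ.le α) hΓα.le)
            (Real.rpow_nonneg hpos.le _)) (Real.exp_nonneg _)),
        ← ENNReal.ofReal_mul hC₁r.le]
      congr 1
      have h1 : x ^ (A - 1) = x ^ (α - 1) * x ^ K := by
        rw [show A - 1 = (α - 1) + (K : ℝ) from by rw [hAdef]; ring,
          Real.rpow_add hpos, Real.rpow_natCast]
      have h2 : Real.exp (-(R * x)) = Real.exp (-(β * x)) * Real.exp (-((N : ℝ) * x)) := by
        rw [← Real.exp_add]; congr 1; rw [hRdef]; ring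
      have hcanc : Real.Gamma A / R ^ A * (R ^ A / Real.Gamma A) = 1 := by
        rw [div_mul_div_comm, mul_comm (Real.Gamma A)]
        exact div_self (mul_pos hRA hΓA).ne'
      rw [h1, h2, hC₁rdef]
      linear_combination
        (-(β ^ α / Real.Gamma α * U ^ K * (x ^ (α - 1) * x ^ K) *
          (Real.exp (-(β * x)) * Real.exp (-((N : ℝ) * x))))) * hcanc
  have hG1 : (gammaMeasure α β).withDensity g₁ = C₁ • gammaMeasure A R := by
    have hmg : Measurable (gammaPDF α β) := (measurable_gammaPDFReal α β).ennreal_ofReal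
    have hmg' : Measurable (gammaPDF A R) := (measurable_gammaPDFReal A R).ennreal_ofReal
    rw [gammaMeasure, ← withDensity_mul _ hmg hg₁]
    have h : (gammaPDF α β * g₁) = fun x => gammaPDF α β x * g₁ x := rfl
    rw [h, withDensity_congr_ae key]
    have h' : (fun x => C₁ * gammaPDF A R x) = C₁ • gammaPDF A R := rfl
    rw [h', withDensity_smul _ hmg', gammaMeasure]
  -- finiteness instances
  haveI i1 : IsFiniteMeasure ((gammaMeasure α β).withDensity g₁) := by
    rw [hG1]
    exact ⟨by rw [Measure.smul_apply, smul_eq_mul, measure_univ, mul_one]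
              exact hC₁fin.lt_top⟩
  haveI i2 : IsFiniteMeasure (H₀.withDensity g₂) := by
    rw [hH2]
    exact ⟨by rw [Measure.smul_apply, smul_eq_mul, measure_univ, mul_one]; exact hc_fin⟩
  -- the density factorizes a.e.
  have hae : (fun ξφ : ℝ × Φ => ∏ j : Fin N, f (Z j) ξφ)
      =ᵐ[(gammaMeasure α β).prod H₀] fun x => g₁ x.1 * g₂ x.2 := by
    have hres : (gammaMeasure α β) (Set.Iio 0) = 0 := by
      rw [gammaMeasure, withDensity_apply _ measurableSet_Iio]
      exact lintegral_gammaPDF_of_nonpos le_rfl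
    have hnull : ((gammaMeasure α β).prod H₀) (Set.Iio 0 ×ˢ Set.univ) = 0 := by
      rw [Measure.prod_prod, hres, zero_mul]
    have hnn : ∀ᵐ x ∂((gammaMeasure α β).prod H₀), 0 ≤ x.1 := by
      rw [ae_iff]
      have h : {x : ℝ × Φ | ¬ 0 ≤ x.1} = Set.Iio 0 ×ˢ Set.univ := by
        ext x; simp [not_le]
      rw [h]; exact hnull
    filter_upwards [hnn] with x hx
    simp only [hf, hg₁def, hg₂def]
    rw [Finset.prod_mul_distrib]
    congr 1
    rw [← ENNReal.ofReal_prod_of_nonneg (fun j _ => by positivity)]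
    congr 1
    rw [Finset.prod_mul_distrib, Finset.prod_mul_distrib, Finset.prod_pow_eq_pow_sum,
      Finset.prod_pow_eq_pow_sum, Finset.prod_const, ← hK]
    congr 2
    rw [← Real.exp_nat_mul]
    congr 1
    simp [mul_comm, neg_mul, mul_neg]
  -- put everything together
  have hM' : M = (C₁ * c) • ((gammaMeasure A R).prod HZ) := by
    rw [hM, hG₀, withDensity_congr_ae hae, aux_prod_withDensity _ _ hg₁ hg₂, hG1, hH2,
      aux_smul_prod_smul _ _ hC₁fin hc_fin.ne]
  rw [hM', Measure.smul_apply, smul_eq_mul, measure_univ, mul_one, smul_smul,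
    ENNReal.inv_mul_cancel (mul_ne_zero hC₁pos.ne' hc_pos.ne')
      (ENNReal.mul_ne_top hC₁fin hc_fin.ne), one_smul]
end

section
/- Let 𝒳 and Φ be measurable spaces, H₀ a probability measure on Φ, p : Φ × 𝒳 → ℝ≥0 jointly measurable, U > 0, and α, β > 0. Let Z_1, …, Z_N and X be finite subsets (Finsets) of 𝒳, with likelihood f(Z | ξ, φ) = ξ^{|Z|} e^{-ξ} U^{|Z|} ∏_{z ∈ Z} p(φ, z) and prior G₀ = Gamma(α, β) ⊗ H₀ on (0,∞) × Φ. Set α_𝒵 = α + Σ_j |Z_j|, β_𝒵 = β + N, assume c := ∫_Φ ∏_j ∏_{z ∈ Z_j} p(φ, z) dH₀(φ) ∈ (0, ∞), and let H_𝒵 be the probability measure with density φ ↦ c^{-1} ∏_j ∏_{z∈Z_j} p(φ, z) with respect to H₀. Then the predictive likelihood of X given 𝒵 = (Z_1,…,Z_N), i.e., the integral of f(X | ξ, φ) against the posterior Gamma(α_𝒵, β_𝒵) ⊗ H_𝒵, equals (Γ(α_𝒵 + |X|) · β_𝒵^{α_𝒵}) / (Γ(α_𝒵) · (β_𝒵 +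 1)^{α_𝒵 + |X|}) · U^{|X|} · ∫_Φ ∏_{x ∈ X} p(φ, x) dH_𝒵(φ), as an identity in the extended nonnegative reals. (Proposition 3, predictive-likelihood part.) -/
open MeasureTheory
open scoped ENNReal NNReal

lemma lint_gamma_scaled {s r : ℝ} (hs : 0 < s) (hr : 0 < r) :
    ∫⁻ x in Set.Ioi 0, ENNReal.ofReal (x ^ (s - 1) * Real.exp (-(r * x))) =
      ENNReal.ofReal (Real.Gamma s / r ^ s) := by
  have h1 := ProbabilityTheory.lintegral_gammaPDF_eq_one hs hr
  have hsplit : (∫⁻ x, ProbabilityTheory.gammaPDF s r x) =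
      (∫⁻ x in Set.Iic 0, ProbabilityTheory.gammaPDF s r x) +
      ∫⁻ x in Set.Ioi 0, ProbabilityTheory.gammaPDF s r x := by
    rw [← lintegral_add_compl _ (measurableSet_Iic (a := (0:ℝ)))]
    congr 1
    simp [Set.compl_Iic]
  have hIic : (∫⁻ x in Set.Iic 0, ProbabilityTheory.gammaPDF s r x) = 0 := by
    rw [← setLIntegral_congr (Iio_ae_eq_Iic (a := (0:ℝ)) (μ := volume))]
    rw [setLIntegral_congr_fun measurableSet_Iio
      (fun x hx => ProbabilityTheory.gammaPDF_of_neg hx)]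
    simp
  have hIoi : (∫⁻ x in Set.Ioi 0, ProbabilityTheory.gammaPDF s r x) =
      ENNReal.ofReal (r ^ s / Real.Gamma s) *
        ∫⁻ x in Set.Ioi 0, ENNReal.ofReal (x ^ (s - 1) * Real.exp (-(r * x))) := by
    rw [← lintegral_const_mul' _ _ ENNReal.ofReal_ne_top]
    refine setLIntegral_congr_fun measurableSet_Ioi
      (fun x hx => ?_)
    rw [ProbabilityTheory.gammaPDF_of_nonneg (le_of_lt hx),
      ← ENNReal.ofReal_mul (by positivity)]
    ring_nf
  rw [hsplit, hIic, zero_add, hIoi] at h1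
  have hΓ : 0 < Real.Gamma s := Real.Gamma_pos_of_pos hs
  have hrs : 0 < r ^ s := Real.rpow_pos_of_pos hr s
  calc ∫⁻ x in Set.Ioi 0, ENNReal.ofReal (x ^ (s - 1) * Real.exp (-(r * x)))
      = ENNReal.ofReal (Real.Gamma s / r ^ s) * (ENNReal.ofReal (r ^ s / Real.Gamma s) *
        ∫⁻ x in Set.Ioi 0, ENNReal.ofReal (x ^ (s - 1) * Real.exp (-(r * x)))) := by
        rw [← mul_assoc, ← ENNReal.ofReal_mul (by positivity)]
        rw [div_mul_div_comm]
        rw [show Real.Gamma s * r ^ s / (r ^ s * Real.Gamma s) = 1 by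
          field_simp]
        simp
    _ = ENNReal.ofReal (Real.Gamma s / r ^ s) := by rw [h1, mul_one]

/-- **Proposition 3, predictive-likelihood part.** For the Poisson point process likelihood
`f(X | ξ, φ) = ξ^{|X|} e^{-ξ} U^{|X|} ∏_{x ∈ X} p(φ, x)` and posterior
`Gamma(α_𝒵, β_𝒵) ⊗ H_𝒵`, the predictive likelihood of a new point pattern `X` is
`f(X | 𝒵) = Γ(α_𝒵 + |X|) β_𝒵^{α_𝒵} / (Γ(α_𝒵) (β_𝒵 + 1)^{α_𝒵 + |X|}) · U^{|X|} ·
∫ ∏_{x ∈ X} p(φ, x) dH_𝒵(φ)`. -/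
theorem poisson_point_process_predictive_likelihood
    {𝒳 Φ : Type*} [MeasurableSpace 𝒳] [MeasurableSpace Φ]
    (H₀ : Measure Φ) [IsProbabilityMeasure H₀]
    (p : Φ × 𝒳 → ℝ≥0) (hp : Measurable p)
    (U : ℝ) (hU : 0 < U) (α β : ℝ) (hα : 0 < α) (hβ : 0 < β)
    (N : ℕ) (Z : Fin N → Finset 𝒳) (X : Finset 𝒳)
    (f : Finset 𝒳 → ℝ × Φ → ℝ≥0∞)
    (hf : ∀ (S : Finset 𝒳) (ξφ : ℝ × Φ), f S ξφ =
      ENNReal.ofReal (ξφ.1 ^ S.card * Real.exp (-ξφ.1) * U ^ S.card) *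
        ∏ z ∈ S, (p (ξφ.2, z) : ℝ≥0∞))
    (αZ βZ : ℝ)
    (hαZ : αZ = α + ∑ j : Fin N, ((Z j).card : ℝ)) (hβZ : βZ = β + N)
    (c : ℝ≥0∞)
    (hc : c = ∫⁻ φ, ∏ j : Fin N, ∏ z ∈ Z j, (p (φ, z) : ℝ≥0∞) ∂H₀)
    (hc_pos : 0 < c) (hc_fin : c < ∞)
    (HZ : Measure Φ)
    (hHZ : HZ = H₀.withDensity fun φ => c⁻¹ * ∏ j : Fin N, ∏ z ∈ Z j, (p (φ, z) : ℝ≥0∞)) :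
    ∫⁻ ξφ, f X ξφ ∂((ProbabilityTheory.gammaMeasure αZ βZ).prod HZ) =
      ENNReal.ofReal
          (Real.Gamma (αZ + X.card) * βZ ^ αZ /
            (Real.Gamma αZ * (βZ + 1) ^ (αZ + X.card))) *
        ENNReal.ofReal (U ^ X.card) *
        ∫⁻ φ, ∏ x ∈ X, (p (φ, x) : ℝ≥0∞) ∂HZ := by
  have hαZ_pos : 0 < αZ := by
    rw [hαZ]
    have : (0:ℝ) ≤ ∑ j : Fin N, ((Z j).card : ℝ) :=
      Finset.sum_nonneg fun j _ => by positivity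
    linarith
  have hβZ_pos : 0 < βZ := by rw [hβZ]; positivity
  set n := X.card with hn
  -- measurability
  have hg : Measurable fun ξ : ℝ =>
      ENNReal.ofReal (ξ ^ n * Real.exp (-ξ) * U ^ n) := by
    apply Measurable.ennreal_ofReal
    exact ((measurable_id.pow_const n).mul
      (Real.measurable_exp.comp measurable_neg)).mul measurable_const
  have hh : Measurable fun φ : Φ => ∏ x ∈ X, (p (φ, x) : ℝ≥0∞) := by
    apply Finset.measurable_prod
    intro x _
    exact (hp.comp measurable_prodMk_right).coe_nnreal_ennreal
  -- factorize
  have hfac : ∫⁻ ξφ, f X ξφ ∂((ProbabilityTheory.gammaMeasure αZ βZ).prod HZ) =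
      (∫⁻ ξ, ENNReal.ofReal (ξ ^ n * Real.exp (-ξ) * U ^ n)
          ∂(ProbabilityTheory.gammaMeasure αZ βZ)) *
        ∫⁻ φ, ∏ x ∈ X, (p (φ, x) : ℝ≥0∞) ∂HZ := by
    subst hHZ
    rw [← lintegral_prod_mul hg.aemeasurable hh.aemeasurable]
    exact lintegral_congr fun ξφ => hf X ξφ
  -- the gamma integral
  set s : ℝ := αZ + n with hs
  have hs_pos : 0 < s := by positivity
  have hΓ : 0 < Real.Gamma αZ := Real.Gamma_pos_of_pos hαZ_pos
  have hG : (∫⁻ ξ, ENNReal.ofReal (ξ ^ n * Real.exp (-ξ) * U ^ n)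
      ∂(ProbabilityTheory.gammaMeasure αZ βZ)) =
      ENNReal.ofReal (Real.Gamma s * βZ ^ αZ /
        (Real.Gamma αZ * (βZ + 1) ^ s)) * ENNReal.ofReal (U ^ n) := by
    have hpdf : Measurable (ProbabilityTheory.gammaPDF αZ βZ) :=
      (ProbabilityTheory.measurable_gammaPDFReal αZ βZ).ennreal_ofReal
    rw [ProbabilityTheory.gammaMeasure,
      lintegral_withDensity_eq_lintegral_mul _ hpdf hg]
    have hsplit : (∫⁻ ξ, (ProbabilityTheory.gammaPDF αZ βZ *
          fun ξ => ENNReal.ofReal (ξ ^ n * Real.exp (-ξ) * U ^ n)) ξ) =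
        (∫⁻ ξ in Set.Iic 0, (ProbabilityTheory.gammaPDF αZ βZ *
          fun ξ => ENNReal.ofReal (ξ ^ n * Real.exp (-ξ) * U ^ n)) ξ) +
        ∫⁻ ξ in Set.Ioi 0, (ProbabilityTheory.gammaPDF αZ βZ *
          fun ξ => ENNReal.ofReal (ξ ^ n * Real.exp (-ξ) * U ^ n)) ξ := by
      rw [← lintegral_add_compl _ (measurableSet_Iic (a := (0:ℝ)))]
      congr 1
      simp [Set.compl_Iic]
    have hIic : (∫⁻ ξ in Set.Iic 0, (ProbabilityTheory.gammaPDF αZ βZ *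
          fun ξ => ENNReal.ofReal (ξ ^ n * Real.exp (-ξ) * U ^ n)) ξ) = 0 := by
      rw [← setLIntegral_congr (Iio_ae_eq_Iic (a := (0:ℝ)) (μ := volume))]
      rw [setLIntegral_congr_fun measurableSet_Iio
        (fun x (hx : x < 0) =>
          show _ = (0:ℝ≥0∞) by simp [ProbabilityTheory.gammaPDF_of_neg hx])]
      simp
    have hIoi : (∫⁻ ξ in Set.Ioi 0, (ProbabilityTheory.gammaPDF αZ βZ *
          fun ξ => ENNReal.ofReal (ξ ^ n * Real.exp (-ξ) * U ^ n)) ξ) =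
        ENNReal.ofReal (U ^ n * (βZ ^ αZ / Real.Gamma αZ)) *
          ∫⁻ ξ in Set.Ioi 0, ENNReal.ofReal (ξ ^ (s - 1) * Real.exp (-((βZ + 1) * ξ))) := by
      rw [← lintegral_const_mul' _ _ ENNReal.ofReal_ne_top]
      refine setLIntegral_congr_fun measurableSet_Ioi
        (fun ξ hξ => ?_)
      have hξ0 : (0:ℝ) < ξ := hξ
      simp only [Pi.mul_apply]
      rw [ProbabilityTheory.gammaPDF_of_nonneg hξ0.le,
        ← ENNReal.ofReal_mul (by positivity), ← ENNReal.ofReal_mul (by positivity)]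
      congr 1
      have hpow : ξ ^ (αZ - 1) * ξ ^ n = ξ ^ (s - 1) := by
        rw [← Real.rpow_natCast ξ n, ← Real.rpow_add hξ0, hs]
        ring_nf
      have hexp : Real.exp (-(βZ * ξ)) * Real.exp (-ξ) =
          Real.exp (-((βZ + 1) * ξ)) := by
        rw [← Real.exp_add]; ring_nf
      calc βZ ^ αZ / Real.Gamma αZ * ξ ^ (αZ - 1) * Real.exp (-(βZ * ξ)) *
            (ξ ^ n * Real.exp (-ξ) * U ^ n)
          = U ^ n * (βZ ^ αZ / Real.Gamma αZ) *
            ((ξ ^ (αZ - 1) * ξ ^ n) * (Real.exp (-(βZ * ξ)) * Real.exp (-ξ))) := by ring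
        _ = U ^ n * (βZ ^ αZ / Real.Gamma αZ) * (ξ ^ (s - 1) * Real.exp (-((βZ + 1) * ξ))) := by
            rw [hpow, hexp]
    rw [hsplit, hIic, zero_add, hIoi,
      lint_gamma_scaled hs_pos (by positivity : (0:ℝ) < βZ + 1),
      ← ENNReal.ofReal_mul (by positivity), ← ENNReal.ofReal_mul (by positivity)]
    congr 1
    have h1 : 0 < (βZ + 1) ^ s := Real.rpow_pos_of_pos (by positivity) s
    field_simp
  rw [hfac, hG]
end
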